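/- Let F : V → W be left adjoint to Λ : W → V, let C be a monad on V with a monad morphism α : C → ΛF, and give F the right C-action ρ = εF ∘ Fα : FC → F (where ε is the counit). Then for any C-algebra (X, ξ) such that the coequalizer F ⊗_C X of Fξ and ρ_X exists in W, there is a natural bijection W(F ⊗_C X, Y) ≅ C-Alg(X, ΛY) for all objects Y of W, where ΛY is the C-algebra with action Λε ∘ αΛ. -/

import Mathlib

open CategoryTheory CategoryTheory.Limits

/-- Given `F ⊣ Λ'` with induced monad `ΛF`, a monad morphism `α : C ⟶ ΛF`, and a
`C`-algebra `(X, ξ)` such that the coequalizer `F ⊗_C X` of `Fξ` and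
`ρ = εF ∘ Fα` exists, there is a natural bijection
`W(F ⊗_C X, Y) ≅ C-Alg(X, ΛY)`, where `ΛY` has the `C`-action `Λε ∘ αΛ`. -/
theorem stmt17 {V W : Type*} [Category V] [Category W]
    (F : V ⥤ W) (Λ' : W ⥤ V) (adj : F ⊣ Λ')
    (C : Monad V) (α : C ⟶ adj.toMonad)
    (A : C.Algebra) (Q : W) (π : F.obj A.A ⟶ Q)
    (w : F.map A.a ≫ π = (F.map (α.app A.A) ≫ adj.counit.app (F.obj A.A)) ≫ π)
    (hc : Nonempty (IsColimit (Cofork.ofπ π w))) :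
    ∃ e : ∀ Y : W, (Q ⟶ Y) ≃
        {h : A.A ⟶ Λ'.obj Y //
          A.a ≫ h = C.map h ≫ α.app (Λ'.obj Y) ≫ Λ'.map (adj.counit.app Y)},
      ∀ (Y Y' : W) (g : Y ⟶ Y') (f : Q ⟶ Y),
        ((e Y') (f ≫ g)).1 = (e Y f).1 ≫ Λ'.map g := by
  obtain ⟨hc⟩ := hc
  have hα : ∀ {X Y : V} (h : X ⟶ Y),
      C.map h ≫ α.app Y = α.app X ≫ Λ'.map (F.map h) := fun h =>
    α.toNatTrans.naturality h
  have fwd : ∀ (Y : W) (f : Q ⟶ Y),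
      A.a ≫ (adj.homEquiv _ _) (π ≫ f)
        = C.map ((adj.homEquiv _ _) (π ≫ f)) ≫ α.app (Λ'.obj Y) ≫
            Λ'.map (adj.counit.app Y) := by
    intro Y f
    have key : F.map ((adj.homEquiv A.A Y) (π ≫ f)) ≫ adj.counit.app Y
        = π ≫ f := by
      simp [Adjunction.homEquiv_unit]
    erw [reassoc_of% (hα ((adj.homEquiv A.A Y) (π ≫ f))), Category.assoc, ← Λ'.map_comp, key,
      ← adj.homEquiv_naturality_left, reassoc_of% w,
      Category.assoc, adj.homEquiv_naturality_left, Adjunction.homEquiv_unit, Λ'.map_comp]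
    congr 1
    erw [adj.right_triangle_components_assoc]
  have bwd : ∀ (Y : W) (h : A.A ⟶ Λ'.obj Y)
      (hh : A.a ≫ h = C.map h ≫ α.app (Λ'.obj Y) ≫ Λ'.map (adj.counit.app Y)),
      F.map A.a ≫ F.map h ≫ adj.counit.app Y
        = (F.map (α.app A.A) ≫ adj.counit.app (F.obj A.A)) ≫
            F.map h ≫ adj.counit.app Y := by
    intro Y h hh
    rw [← F.map_comp_assoc, hh]
    simp only [Functor.map_comp, Category.assoc]
    erw [Functor.map_comp, Category.assoc, adj.counit_naturality (adj.counit.app Y)]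
    erw [Category.assoc, ← adj.counit_naturality_assoc (F.map h), ← F.map_comp_assoc,
      ← F.map_comp_assoc, hα h]
    rfl
  refine ⟨fun Y =>
    { toFun := fun f => ⟨(adj.homEquiv _ _) (π ≫ f), fwd Y f⟩
      invFun := fun h => Cofork.IsColimit.desc hc (F.map h.1 ≫ adj.counit.app Y)
        (bwd Y h.1 h.2)
      left_inv := ?_
      right_inv := ?_ }, ?_⟩
  · intro f
    apply Cofork.IsColimit.hom_ext hc
    dsimp only
    rw [Cofork.IsColimit.π_desc', ← adj.homEquiv_counit, Equiv.symm_apply_apply,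
      Cofork.π_ofπ]
  · rintro ⟨h, hh⟩
    ext
    dsimp only
    have h1 : π ≫ Cofork.IsColimit.desc hc (F.map h ≫ adj.counit.app Y)
        (bwd Y h hh) = F.map h ≫ adj.counit.app Y := by
      simpa using Cofork.IsColimit.π_desc' hc
        (F.map h ≫ adj.counit.app Y) (bwd Y h hh)
    rw [h1]
    simp [Adjunction.homEquiv_unit]
  · intro Y Y' g f
    simp [Adjunction.homEquiv_unit]
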